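/- Let $n \geq 1$, let $\alpha_{op} > 0$ and $\alpha_1,\dots,\alpha_n \geq 0$, and define $z_j = \big(1 + \frac{1}{\alpha_{op}}\sum_{k=1}^{j-1}\alpha_k\big)^{-1}$ for $1 \leq j \leq n$. Then $z_1 = 1$, the sequence $(z_j)$ is nonincreasing (strictly decreasing if all $\alpha_k > 0$), and for any $\ell > 0$, setting $d(S_j,D) = \ell$ for all $j$ and $d(S_{j-1},S_j) = z_j \ell$ for $2 \leq j \leq n$, the SIR-feasibility constraint $d(S_{j-1},S_j) + d(S_j,D) - d(S_{j-1},D) \leq z_j\, d(S_j,D)$ holds with equality for each $2 \leq j \leq n$, and the resulting starvation factor of the first passenger equals $\sum_{j=1}^{n} z_j$. -/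

import Mathlib

theorem stmt10 (n : ℕ) (hn : 1 ≤ n) (αop : ℝ) (hαop : 0 < αop)
    (α : ℕ → ℝ) (hα : ∀ k, 1 ≤ k → k ≤ n → 0 ≤ α k)
    (z : ℕ → ℝ)
    (hz : ∀ j, z j = (1 + (1 / αop) * ∑ k ∈ Finset.Icc 1 (j-1), α k)⁻¹) :
    z 1 = 1 ∧
    (∀ j, 1 ≤ j → j < n → z (j+1) ≤ z j) ∧
    ((∀ k, 1 ≤ k → k ≤ n → 0 < α k) → ∀ j, 1 ≤ j → j < n → z (j+1) < z j) ∧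
    (∀ ℓ : ℝ, 0 < ℓ →
      (∀ j, 2 ≤ j → j ≤ n → z j * ℓ + ℓ - ℓ = z j * ℓ) ∧
      ((∑ j ∈ Finset.Icc 2 n, z j * ℓ) + ℓ) / ℓ = ∑ j ∈ Finset.Icc 1 n, z j) := by
  have hsum_nonneg : ∀ j, j ≤ n → 0 ≤ ∑ k ∈ Finset.Icc 1 j, α k := by
    intro j hj
    apply Finset.sum_nonneg
    intro k hk
    rw [Finset.mem_Icc] at hk
    exact hα k hk.1 (hk.2.trans hj)
  have hden_pos : ∀ j, j ≤ n → 0 < 1 + (1 / αop) * ∑ k ∈ Finset.Icc 1 j, α k := by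
    intro j hj
    have := hsum_nonneg j hj
    positivity
  have hstep : ∀ j, 1 ≤ j → ∑ k ∈ Finset.Icc 1 j, α k
      = (∑ k ∈ Finset.Icc 1 (j-1), α k) + α j := by
    intro j hj
    obtain ⟨m, rfl⟩ : ∃ m, j = m + 1 := ⟨j - 1, by omega⟩
    rw [Finset.sum_Icc_succ_top (by omega)]
    simp
  refine ⟨?_, ?_, ?_, ?_⟩
  · rw [hz 1]; simp
  · intro j hj hjn
    rw [hz j, hz (j+1)]
    simp only [Nat.add_sub_cancel]
    apply inv_anti₀ (hden_pos (j-1) (by omega))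
    have h1 := hstep j hj
    have h2 := hα j hj (by omega)
    have h3 : 0 ≤ 1 / αop := by positivity
    rw [h1]
    nlinarith
  · intro hpos j hj hjn
    rw [hz j, hz (j+1)]
    simp only [Nat.add_sub_cancel]
    apply inv_strictAnti₀ (hden_pos (j-1) (by omega))
    have h1 := hstep j hj
    have h2 := hpos j hj (by omega)
    have h3 : 0 < 1 / αop := by positivity
    rw [h1]
    nlinarith
  · intro ℓ hℓ
    refine ⟨fun j _ _ => by ring, ?_⟩
    have hins : Finset.Icc 1 n = insert 1 (Finset.Icc 2 n) := by
      ext x; simp [Finset.mem_Icc]; omega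
    rw [hins, Finset.sum_insert (by simp)]
    have hz1 : z 1 = 1 := by rw [hz 1]; simp
    rw [hz1, ← Finset.sum_mul]
    field_simp
    ring
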